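/- If every fixed point of a certain progressive map exists, one obtains the Knaster-Tarski principle from Bourbaki-Witt: assuming that every progressive map on every chain-complete poset has a fixed point above every point, it follows that every monotone map on a chain-complete poset has a fixed point above every post-fixed point. -/

import Mathlib

universe u

/-- The Bourbaki–Witt principle implies the Knaster–Tarski principle for chain-complete
posets: if every progressive map on a chain-complete poset has a fixed point above every point,
then every monotone map on a chain-complete poset has a fixed point above every post-fixed
point. -/
theorem stmt8
    (hBW : ∀ (P : Type u) [PartialOrder P] (f : P → P),
      (∀ C : Set P, IsChain (· ≤ ·) C → ∃ s, IsLUB C s) →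
      (∀ x, x ≤ f x) → ∀ x : P, ∃ z, x ≤ z ∧ f z = z) :
    ∀ (P : Type u) [PartialOrder P] (f : P → P),
      (∀ C : Set P, IsChain (· ≤ ·) C → ∃ s, IsLUB C s) →
      Monotone f → ∀ x : P, x ≤ f x → ∃ z, x ≤ z ∧ f z = z := by
  intro P _ f hcc hmono x hx
  -- restrict to post-fixed points above x
  let Q := {y : P // x ≤ y ∧ y ≤ f y}
  let g : Q → Q := fun y => ⟨f y.1, le_trans y.2.1 y.2.2, hmono y.2.2⟩
  have hQcc : ∀ C : Set Q, IsChain (· ≤ ·) C → ∃ s, IsLUB C s := by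
    intro C hC
    rcases C.eq_empty_or_nonempty with rfl | ⟨c, hc⟩
    · refine ⟨⟨x, le_refl x, hx⟩, by intro _ h; exact absurd h (Set.notMem_empty _), ?_⟩
      intro b _
      exact b.2.1
    · obtain ⟨s, hs⟩ := hcc (Subtype.val '' C) (hC.image_of_map_rel _ _ Subtype.val (fun _ _ h => h))
      have hxs : x ≤ s := le_trans c.2.1 (hs.1 ⟨c, hc, rfl⟩)
      have hsf : s ≤ f s := by
        apply hs.2
        rintro d ⟨e, he, rfl⟩
        exact le_trans e.2.2 (hmono (hs.1 ⟨e, he, rfl⟩))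
      refine ⟨⟨s, hxs, hsf⟩, ?_, ?_⟩
      · intro e he
        exact hs.1 ⟨e, he, rfl⟩
      · intro b hb
        exact hs.2 (by rintro d ⟨e, he, rfl⟩; exact hb he)
  obtain ⟨z, hxz, hz⟩ := hBW Q g hQcc (fun y => y.2.2) ⟨x, le_refl x, hx⟩
  exact ⟨z.1, hxz, congrArg Subtype.val hz⟩
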